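/- Let G and H be real Hilbert spaces, let L : G → H be a bounded linear operator with finite-dimensional kernel and finite-dimensional cokernel H/range(L) (i.e. L is Fredholm), let C : G → H be a compact bounded linear operator, and let N : G → H be a continuous map whose image of the unit sphere S = {x ∈ G : ‖x‖ = 1} is relatively compact in H. Define Ψ⁺ : ℝ × ℝ × S → H by Ψ⁺(s, λ, x) = Lx + sN(x) − λCx. Then Ψ⁺ is proper on every bounded and closed subset of ℝ × ℝ × S: if A ⊆ ℝ × ℝ × S is bounded and closed in ℝ × ℝ × G, then the preimage under Ψ⁺|_A of every compact subset of H is compact. -/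

import Mathlib

open Metric Set Pointwise


/-- With `L : G → H` Fredholm, `C` compact and `N` continuous with `N(S)` relatively compact
(`S` the unit sphere of `G`), the map `Ψ⁺(s, λ, x) = Lx + sN(x) − λCx` is proper on every
bounded and closed subset of `ℝ × ℝ × S`. -/
theorem perturbed_map_proper_on_bounded_closed
    {G H : Type*} [NormedAddCommGroup G] [InnerProductSpace ℝ G] [CompleteSpace G]
    [NormedAddCommGroup H] [InnerProductSpace ℝ H] [CompleteSpace H]
    (L C : G →L[ℝ] H)
    (hkerL : FiniteDimensional ℝ (LinearMap.ker (L : G →ₗ[ℝ] H)))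
    (hcokerL : FiniteDimensional ℝ (H ⧸ LinearMap.range (L : G →ₗ[ℝ] H)))
    (hC : IsCompactOperator ⇑C)
    (N : G → H) (hN : Continuous N)
    (hNcpt : IsCompact (closure (N '' Metric.sphere (0 : G) 1))) :
    ∀ A : Set (ℝ × ℝ × G), (∀ p ∈ A, ‖p.2.2‖ = 1) →
      Bornology.IsBounded A → IsClosed A →
      ∀ Kc : Set H, IsCompact Kc →
        IsCompact (A ∩ (fun p : ℝ × ℝ × G =>
          L p.2.2 + p.1 • N p.2.2 - p.2.1 • C p.2.2) ⁻¹' Kc) := by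
  classical
  intro A hAsph hAbd hAcl Kc hKc
  set K : Submodule ℝ G := LinearMap.ker (L : G →ₗ[ℝ] H) with hK
  haveI : FiniteDimensional ℝ K := hkerL
  haveI : CompleteSpace K := FiniteDimensional.complete ℝ K
  -- complement of the range
  obtain ⟨q, hq⟩ := (LinearMap.range (L : G →ₗ[ℝ] H)).exists_isCompl
  haveI : FiniteDimensional ℝ q :=
    (Submodule.quotientEquivOfIsCompl _ q hq).finiteDimensional
  haveI : CompleteSpace q := FiniteDimensional.complete ℝ q
  -- the operator T
  set T : (↥Kᗮ × ↥q) →L[ℝ] H := (L.comp Kᗮ.subtypeL).coprod q.subtypeL with hT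
  have hTinj : LinearMap.ker (T : (↥Kᗮ × ↥q) →ₗ[ℝ] H) = ⊥ := by
    rw [LinearMap.ker_eq_bot']
    rintro ⟨m, f⟩ h
    have h' : L (m : G) + (f : H) = 0 := h
    have hLm : L (m : G) ∈ LinearMap.range (L : G →ₗ[ℝ] H) ⊓ q := by
      refine ⟨LinearMap.mem_range_self _ _, ?_⟩
      have : L (m : G) = -(f : H) := eq_neg_of_add_eq_zero_left h'
      rw [this]; exact q.neg_mem f.2
    rw [hq.inf_eq_bot] at hLm
    have hmK : (m : G) ∈ K := hLm
    have hm0 : m = 0 := by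
      ext
      have := (Submodule.mem_orthogonal K (m : G)).mp ?_ (m : G) hmK
      · simpa [inner_self_eq_zero] using this
      · exact m.2
    have hf0 : (f : H) = 0 := by
      rw [hm0] at h'
      simpa using h'
    exact Prod.ext hm0 (Subtype.ext hf0)
  have hTsurj : LinearMap.range (T : (↥Kᗮ × ↥q) →ₗ[ℝ] H) = ⊤ := by
    rw [LinearMap.range_eq_top]
    intro y
    have hy : y ∈ LinearMap.range (L : G →ₗ[ℝ] H) ⊔ q := by rw [hq.sup_eq_top]; trivial
    obtain ⟨a, ha, b, hb, rfl⟩ := Submodule.mem_sup.mp hy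
    obtain ⟨x, rfl⟩ := ha
    refine ⟨(⟨x - (Submodule.orthogonalProjectionOnto K x : G),
      Submodule.sub_starProjection_mem_orthogonal (K := K) x⟩, ⟨b, hb⟩), ?_⟩
    have hproj : L ((Submodule.orthogonalProjectionOnto K x : G)) = 0 :=
      (Submodule.orthogonalProjectionOnto K x).2
    show L (x - (Submodule.orthogonalProjectionOnto K x : G)) + b = L x + b
    rw [map_sub, hproj, sub_zero]
  set T' := ContinuousLinearEquiv.ofBijective T hTinj hTsurj with hT'
  -- the map and basic closedness
  set Ψ : ℝ × ℝ × G → H := fun p => L p.2.2 + p.1 • N p.2.2 - p.2.1 • C p.2.2 with hΨ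
  have hΨcont : Continuous Ψ := by
    apply Continuous.sub
    · exact (L.continuous.comp (continuous_snd.comp continuous_snd)).add
        (continuous_fst.smul (hN.comp (continuous_snd.comp continuous_snd)))
    · exact (continuous_fst.comp continuous_snd).smul
        (C.continuous.comp (continuous_snd.comp continuous_snd))
  have hBcl : IsClosed (A ∩ Ψ ⁻¹' Kc) := hAcl.inter (hKc.isClosed.preimage hΨcont)
  -- bound on A
  obtain ⟨R, hR⟩ := isBounded_iff_forall_norm_le.mp hAbd
  -- compact sets
  set ZC : Set H := closure (C '' closedBall (0 : G) 1) with hZCdef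
  have hZC : IsCompact ZC := hC.isCompact_closure_image_closedBall (𝕜₁ := ℝ) 1
  set ZN : Set H := closure (N '' Metric.sphere (0 : G) 1) with hZNdef
  set Z : Set H := (fun z : H × (ℝ × H) × (ℝ × H) =>
      z.1 - z.2.1.1 • z.2.1.2 + z.2.2.1 • z.2.2.2) ''
      (Kc ×ˢ ((Icc (-R) R ×ˢ ZN) ×ˢ (Icc (-R) R ×ˢ ZC))) with hZdef
  have hZ : IsCompact Z := by
    refine (hKc.prod (((isCompact_Icc).prod hNcpt).prod ((isCompact_Icc).prod hZC))).image ?_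
    fun_prop
  set M₀ : Set G := (fun y : H => ((T'.symm y).1 : G)) '' Z with hM₀def
  have hM₀ : IsCompact M₀ :=
    hZ.image (continuous_subtype_val.comp (continuous_fst.comp T'.symm.continuous))
  obtain ⟨Rm, hRm⟩ := isBounded_iff_forall_norm_le.mp hM₀.isBounded
  haveI : ProperSpace K := FiniteDimensional.proper ℝ K
  set CK : Set G := Subtype.val '' (closedBall (0 : K) (1 + Rm)) with hCKdef
  have hCK : IsCompact CK := (isCompact_closedBall _ _).image continuous_subtype_val
  have hW : IsCompact (CK + M₀) := hCK.add hM₀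
  -- conclude
  refine IsCompact.of_isClosed_subset
    (((isCompact_Icc : IsCompact (Icc (-R) R)).prod
      ((isCompact_Icc : IsCompact (Icc (-R) R)).prod hW))) hBcl ?_
  rintro ⟨s, lam, x⟩ ⟨hpA, hpK⟩
  have hnorm : ‖((s, lam, x) : ℝ × ℝ × G)‖ ≤ R := hR _ hpA
  have hs' : ‖s‖ ≤ R := le_trans (norm_fst_le ((s, lam, x) : ℝ × ℝ × G)) hnorm
  have hs : s ∈ Icc (-R) R := abs_le.mp (by simpa using hs')
  have hlam' : ‖lam‖ ≤ R := le_trans (le_trans (norm_fst_le ((lam, x) : ℝ × G))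
    (norm_snd_le ((s, lam, x) : ℝ × ℝ × G))) hnorm
  have hlam : lam ∈ Icc (-R) R := abs_le.mp (by simpa using hlam')
  have hx1 : ‖x‖ = 1 := hAsph _ hpA
  -- L x ∈ Z
  have hLxZ : L x ∈ Z := by
    refine ⟨(Ψ (s, lam, x), ((s, N x), (lam, C x))), ⟨hpK, ⟨⟨hs, ?_⟩, ⟨hlam, ?_⟩⟩⟩, ?_⟩
    · exact subset_closure ⟨x, by simpa using hx1, rfl⟩
    · exact subset_closure ⟨x, by simpa [mem_closedBall_zero_iff] using hx1.le, rfl⟩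
    · show Ψ (s, lam, x) - s • N x + lam • C x = L x
      simp only [hΨ]
      abel
  -- decomposition of x
  set m : G := x - (Submodule.orthogonalProjectionOnto K x : G) with hmdef
  have hmK : m ∈ Kᗮ := Submodule.sub_starProjection_mem_orthogonal (K := K) x
  have hTm : T' (⟨m, hmK⟩, 0) = L x := by
    have hproj : L ((Submodule.orthogonalProjectionOnto K x : G)) = 0 := (Submodule.orthogonalProjectionOnto K x).2
    show L m + ((0 : q) : H) = L x
    rw [hmdef, map_sub, hproj, sub_zero]
    simp
  have hmM₀ : m ∈ M₀ := by
    refine ⟨L x, hLxZ, ?_⟩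
    rw [← hTm]
    simp
  have hkball : Submodule.orthogonalProjectionOnto K x ∈ closedBall (0 : K) (1 + Rm) := by
    rw [mem_closedBall_zero_iff]
    have h1 : ‖(Submodule.orthogonalProjectionOnto K x : G)‖ = ‖x - m‖ := by rw [hmdef]; simp
    have : ‖(Submodule.orthogonalProjectionOnto K x : G)‖ ≤ ‖x‖ + ‖m‖ := by
      rw [h1]; exact norm_sub_le _ _
    calc ‖Submodule.orthogonalProjectionOnto K x‖ = ‖(Submodule.orthogonalProjectionOnto K x : G)‖ := rfl
      _ ≤ ‖x‖ + ‖m‖ := this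
      _ ≤ 1 + Rm := by rw [hx1]; exact add_le_add_right (hRm _ hmM₀) 1
  refine ⟨hs, hlam, ?_⟩
  have hxmem : x ∈ CK + M₀ := by
    have hkCK : ((Submodule.orthogonalProjectionOnto K x : G)) ∈ CK :=
      ⟨Submodule.orthogonalProjectionOnto K x, hkball, rfl⟩
    have := Set.add_mem_add hkCK hmM₀
    simpa [hmdef] using this
  exact hxmem
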